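/- Assume E(Y) = 0, Var(Y) = V ≠ 0, σ² = Var(V^{-1}(Y Y^u − S^{u}_{Cl} Y²)) > 0, fix t ∈ ℝ and N ≥ 1, and suppose Σ_{i=1}^N Y_i² > 0. Then, setting Δ_{N,j} = σ^{-1}[Y_j Y^u_j V − (C_u + tσV/√N) Y_j²] for j = 1,…,N, the event A_t = {(√N/σ)(S̃^{u}_{N,Cl} − S^{u}_{Cl}) ≤ t} coincides with {N^{-1/2} Σ_{j=1}^N Δ_{N,j} ≤ 0}, and, provided Var(Δ_N) > 0, also with {√N (Δ̄_{N} − E(Δ_N))/√(Var Δ_N) ≤ t/√(1 + tν_N/(σ√N V²))}, where Δ̄_N = N^{-1}Σ_j Δ_{N,j} and ν_N = (tσ/√N + 2S^{u}_{Cl}) Var(Y²) − 2 Cov(Y Y^u, Y²). -/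

import Mathlib

open MeasureTheory ProbabilityTheory Filter Finset
open scoped NNReal ENNReal Topology

noncomputable section

namespace SobolPaper

variable {p : ℕ} {𝒳 : Fin p → Type*} [∀ i, MeasurableSpace (𝒳 i)]

/-- The pick-freeze probability space: two independent copies of the input vector
`X = (X₁,…,X_p)` (with independent coordinates) are modeled canonically as the two
canonical projections of the product of two copies of the product measure. -/
def pfMeasure (ν : ∀ i, Measure (𝒳 i)) : Measure ((∀ i, 𝒳 i) × (∀ i, 𝒳 i)) :=
  (Measure.pi ν).prod (Measure.pi ν)

instance (ν : ∀ i, Measure (𝒳 i)) [∀ i, IsProbabilityMeasure (ν i)] :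
    IsProbabilityMeasure (pfMeasure ν) := by
  unfold pfMeasure; infer_instance

/-- The output `Y = f(X)`. -/
def Yout (f : (∀ i, 𝒳 i) → ℝ) (ω : (∀ i, 𝒳 i) × (∀ i, 𝒳 i)) : ℝ := f ω.1

/-- The pick-freeze input `X^u`: coordinates in `u` are frozen (taken from `X`),
the others are resampled (taken from the independent copy `X'`). -/
def Xpf (u : Finset (Fin p)) (ω : (∀ i, 𝒳 i) × (∀ i, 𝒳 i)) : ∀ i, 𝒳 i :=
  fun i => if i ∈ u then ω.1 i else ω.2 i

/-- The pick-freeze replication `Y^u = f(X^u)`. -/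
def Ypf (f : (∀ i, 𝒳 i) → ℝ) (u : Finset (Fin p)) (ω : (∀ i, 𝒳 i) × (∀ i, 𝒳 i)) : ℝ :=
  f (Xpf u ω)

lemma measurable_Xpf (u : Finset (Fin p)) : Measurable (Xpf (𝒳 := 𝒳) u) := by
  apply measurable_pi_lambda
  intro i
  by_cases hi : i ∈ u
  · simp only [Xpf, hi, ↓reduceIte]; exact (measurable_pi_apply i).comp measurable_fst
  · simp only [Xpf, hi, ↓reduceIte]; exact (measurable_pi_apply i).comp measurable_snd

lemma map_Xpf (ν : ∀ i, Measure (𝒳 i)) [∀ i, IsProbabilityMeasure (ν i)]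
    (u : Finset (Fin p)) :
    Measure.map (Xpf u) (pfMeasure ν) = Measure.pi ν := by
  refine (Measure.pi_eq fun s hs => ?_).symm
  rw [Measure.map_apply (measurable_Xpf u) (MeasurableSet.univ_pi hs)]
  have hpre : Xpf (𝒳 := 𝒳) u ⁻¹' Set.pi Set.univ s =
      (Set.pi Set.univ fun i => if hi : i ∈ u then s i else Set.univ) ×ˢ
        (Set.pi Set.univ fun i => if hi : i ∈ u then Set.univ else s i) := by
    ext ω
    simp only [Set.mem_preimage, Set.mem_pi, Set.mem_univ, forall_true_left, Set.mem_prod]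
    constructor
    · intro hmem
      refine ⟨fun i => ?_, fun i => ?_⟩
      · by_cases hi : i ∈ u
        · simp only [hi]; simpa [Xpf, hi] using hmem i
        · simp [hi]
      · by_cases hi : i ∈ u
        · simp [hi]
        · simp only [hi]; simpa [Xpf, hi] using hmem i
    · rintro ⟨h1, h2⟩ i
      by_cases hi : i ∈ u
      · simpa [Xpf, hi] using h1 i
      · simpa [Xpf, hi] using h2 i
  rw [hpre]
  unfold pfMeasure
  rw [Measure.prod_prod, Measure.pi_pi, Measure.pi_pi, ← Finset.prod_mul_distrib]
  refine Finset.prod_congr rfl fun i _ => ?_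
  by_cases hi : i ∈ u <;> simp [hi]

lemma memℒp_Ypf {f : (∀ i, 𝒳 i) → ℝ} (hf : Measurable f)
    (ν : ∀ i, Measure (𝒳 i)) [∀ i, IsProbabilityMeasure (ν i)]
    (u : Finset (Fin p)) (hY2 : MemLp (Yout f) 2 (pfMeasure ν)) :
    MemLp (Ypf f u) 2 (pfMeasure ν) := by
  have hfst : Measure.map Prod.fst (pfMeasure ν) = Measure.pi ν := by
    unfold pfMeasure
    rw [Measure.map_fst_prod]
    simp
  have hfℒ : MemLp f 2 (Measure.pi ν) := by
    rw [← hfst]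
    exact (memLp_map_measure_iff hf.aestronglyMeasurable measurable_fst.aemeasurable).mpr hY2
  have : MemLp f 2 (Measure.map (Xpf u) (pfMeasure ν)) := by rw [map_Xpf]; exact hfℒ
  exact (memLp_map_measure_iff hf.aestronglyMeasurable
    (measurable_Xpf u).aemeasurable).mp this

lemma integrable_mul_of_memℒp_two {Ω : Type*} [MeasurableSpace Ω] {μ : Measure Ω}
    {g h : Ω → ℝ} (hg : MemLp g 2 μ) (hh : MemLp h 2 μ) :
    Integrable (fun ω => g ω * h ω) μ := by
  have : MemLp (g • h) 1 μ := hh.smul hg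
  exact memLp_one_iff_integrable.mp this

lemma variance_sub_const_mul {Ω : Type*} [MeasurableSpace Ω] (μ : Measure Ω)
    [IsProbabilityMeasure μ] {g h : Ω → ℝ} (hg : MemLp g 2 μ) (hh : MemLp h 2 μ) (r : ℝ) :
    variance (fun ω => g ω - r * h ω) μ =
      ((∫ ω, g ω ^ 2 ∂μ) - 2 * r * (∫ ω, g ω * h ω ∂μ) + r ^ 2 * (∫ ω, h ω ^ 2 ∂μ)) -
        ((∫ ω, g ω ∂μ) - r * (∫ ω, h ω ∂μ)) ^ 2 := by
  have hgh : MemLp (fun ω => g ω - r * h ω) 2 μ := hg.sub (hh.const_mul r)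
  rw [variance_eq_sub hgh]
  have h1 : (∫ ω, (g ω - r * h ω) ^ 2 ∂μ) =
      (∫ ω, g ω ^ 2 ∂μ) - 2 * r * (∫ ω, g ω * h ω ∂μ) + r ^ 2 * (∫ ω, h ω ^ 2 ∂μ) := by
    have : ∀ ω, (g ω - r * h ω) ^ 2 =
        g ω ^ 2 - 2 * r * (g ω * h ω) + r ^ 2 * h ω ^ 2 := fun ω => by ring
    simp_rw [this]
    rw [integral_add, integral_sub, integral_const_mul, integral_const_mul]
    · exact hg.integrable_sq
    · exact (integrable_mul_of_memℒp_two hg hh).const_mul _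
    · exact (hg.integrable_sq).sub ((integrable_mul_of_memℒp_two hg hh).const_mul _)
    · exact (hh.integrable_sq).const_mul _
  have h2 : (∫ ω, (g ω - r * h ω) ∂μ) = (∫ ω, g ω ∂μ) - r * (∫ ω, h ω ∂μ) := by
    rw [integral_sub (hg.integrable one_le_two) ((hh.integrable one_le_two).const_mul r),
      integral_const_mul]
  simp only [Pi.pow_apply] at *
  rw [h1, h2]


lemma mul_nonpos_iff_of_pos {e x : ℝ} (he : 0 < e) : e * x ≤ 0 ↔ x ≤ 0 := by
  constructor
  · intro h; nlinarith
  · intro h; exact mul_nonpos_of_nonneg_of_nonpos he.le h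

/-- Covariance of two real random variables. -/
def cov {α : Type*} [MeasurableSpace α] (μ : Measure α) (g h : α → ℝ) : ℝ :=
  ∫ a, g a * h a ∂μ - (∫ a, g a ∂μ) * ∫ a, h a ∂μ

/-- The closed Sobol index `S^u_Cl = Cov(Y, Y^u) / Var(Y)`. -/
def SCl (ν : ∀ i, Measure (𝒳 i)) (f : (∀ i, 𝒳 i) → ℝ) (u : Finset (Fin p)) : ℝ :=
  cov (pfMeasure ν) (Yout f) (Ypf f u) / variance (Yout f) (pfMeasure ν)

/-- The standard Gaussian cumulative distribution function `Φ`. -/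
def Phi (z : ℝ) : ℝ := cdf (gaussianReal 0 1) z

/-- The estimator `S̃^u_{N,Cl}` for the centered case, built from a sample
`W i ω = (Y_i(ω), Y_i^u(ω))`. -/
def StildeN {Ω' : Type*} (W : ℕ → Ω' → ℝ × ℝ) (N : ℕ) (ω : Ω') : ℝ :=
  ((∑ i ∈ Finset.range N, (W i ω).1 * (W i ω).2) / N) /
    ((∑ i ∈ Finset.range N, (W i ω).1 ^ 2) / N)

variable {p : ℕ} {𝒳 : Fin p → Type*} [∀ i, MeasurableSpace (𝒳 i)]

/-- `σ² = Var(V⁻¹ (Y Y^u − S^u_Cl Y²))` (asymptotic variance, centered case). -/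
def sigmaSq (ν : ∀ i, Measure (𝒳 i)) (f : (∀ i, 𝒳 i) → ℝ) (u : Finset (Fin p)) : ℝ :=
  variance (fun ω => (variance (Yout f) (pfMeasure ν))⁻¹ *
    (Yout f ω * Ypf f u ω - SCl ν f u * Yout f ω ^ 2)) (pfMeasure ν)

/-- `Δ_N = σ⁻¹ V [Y Y^u − (S^u_Cl + tσ/√N) Y²]`. -/
def DeltaN (ν : ∀ i, Measure (𝒳 i)) (f : (∀ i, 𝒳 i) → ℝ) (u : Finset (Fin p))
    (N : ℕ) (t : ℝ) (ω : (∀ i, 𝒳 i) × (∀ i, 𝒳 i)) : ℝ :=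
  (Real.sqrt (sigmaSq ν f u))⁻¹ * variance (Yout f) (pfMeasure ν) *
    (Yout f ω * Ypf f u ω -
      (SCl ν f u + t * Real.sqrt (sigmaSq ν f u) / Real.sqrt N) * Yout f ω ^ 2)

/-- `μ_{3,N} = E |(Δ_N − E Δ_N)/√(Var Δ_N)|³`. -/
def mu3N (ν : ∀ i, Measure (𝒳 i)) (f : (∀ i, 𝒳 i) → ℝ) (u : Finset (Fin p))
    (N : ℕ) (t : ℝ) : ℝ :=
  ∫ ω, |(DeltaN ν f u N t ω - ∫ ω', DeltaN ν f u N t ω' ∂(pfMeasure ν)) /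
      Real.sqrt (variance (DeltaN ν f u N t) (pfMeasure ν))| ^ 3 ∂(pfMeasure ν)

/-- `ν_N = (tσ/√N + 2 S^u_Cl) Var(Y²) − 2 Cov(Y Y^u, Y²)`. -/
def nuN (ν : ∀ i, Measure (𝒳 i)) (f : (∀ i, 𝒳 i) → ℝ) (u : Finset (Fin p))
    (N : ℕ) (t : ℝ) : ℝ :=
  (t * Real.sqrt (sigmaSq ν f u) / Real.sqrt N + 2 * SCl ν f u) *
      variance (fun ω => Yout f ω ^ 2) (pfMeasure ν) -
    2 * cov (pfMeasure ν) (fun ω => Yout f ω * Ypf f u ω) (fun ω => Yout f ω ^ 2)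

/-- The right-hand side `B(t)` of the Berry–Esseen inequality for the centered estimator. -/
def Bbound (ν : ∀ i, Measure (𝒳 i)) (f : (∀ i, 𝒳 i) → ℝ) (u : Finset (Fin p))
    (κ : ℝ) (N : ℕ) (t : ℝ) : ℝ :=
  κ * mu3N ν f u N t / Real.sqrt N +
    |Phi t - Phi (t / Real.sqrt (1 + t * nuN ν f u N t /
      (Real.sqrt (sigmaSq ν f u) * Real.sqrt N * (variance (Yout f) (pfMeasure ν)) ^ 2)))|

/-- On the event `Σ Y_i² > 0`, the event
`A_t = {(√N/σ)(S̃^u_{N,Cl} − S^u_Cl) ≤ t}` coincides with `{N^{-1/2} Σ_j Δ_{N,j} ≤ 0}`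
and, provided `Var(Δ_N) > 0`, also with the normalized event. -/
theorem statement17
    {p : ℕ} {𝒳 : Fin p → Type*} [∀ i, MeasurableSpace (𝒳 i)]
    (ν : ∀ i, Measure (𝒳 i)) [∀ i, IsProbabilityMeasure (ν i)]
    (f : (∀ i, 𝒳 i) → ℝ) (hf : Measurable f)
    (hY2 : MemLp (Yout f) 2 (pfMeasure ν))
    (hVar : variance (Yout f) (pfMeasure ν) ≠ 0)
    (u : Finset (Fin p))
    {Ω' : Type*} [MeasurableSpace Ω'] (P : Measure Ω') [IsProbabilityMeasure P]
    (W : ℕ → Ω' → ℝ × ℝ)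
    (hindep : iIndepFun W P)
    (hident : ∀ i, IdentDistrib (W i) (fun ω => (Yout f ω, Ypf f u ω)) P (pfMeasure ν))
    (hcent : ∫ ω, Yout f ω ∂(pfMeasure ν) = 0)
    (hσpos : 0 < sigmaSq ν f u)
    (t : ℝ) (N : ℕ) (hN : 1 ≤ N)
    (V C S σ : ℝ)
    (hV : V = variance (Yout f) (pfMeasure ν))
    (hC : C = cov (pfMeasure ν) (Yout f) (Ypf f u))
    (hS : S = SCl ν f u)
    (hσ : σ = Real.sqrt (sigmaSq ν f u)) :
    ∀ ω', 0 < ∑ i ∈ Finset.range N, (W i ω').1 ^ 2 →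
      ((Real.sqrt N / σ * (StildeN W N ω' - S) ≤ t ↔
        (N : ℝ) ^ (-(1 : ℝ) / 2) *
          ∑ j ∈ Finset.range N,
            σ⁻¹ * ((W j ω').1 * (W j ω').2 * V -
              (C + t * σ * V / Real.sqrt N) * (W j ω').1 ^ 2) ≤ 0) ∧
      (0 < variance (DeltaN ν f u N t) (pfMeasure ν) →
        (Real.sqrt N / σ * (StildeN W N ω' - S) ≤ t ↔
          Real.sqrt N *
            (((∑ j ∈ Finset.range N,
                σ⁻¹ * ((W j ω').1 * (W j ω').2 * V -
                  (C + t * σ * V / Real.sqrt N) * (W j ω').1 ^ 2)) / N -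
              ∫ ω, DeltaN ν f u N t ω ∂(pfMeasure ν)) /
              Real.sqrt (variance (DeltaN ν f u N t) (pfMeasure ν))) ≤
            t / Real.sqrt (1 + t * nuN ν f u N t /
              (σ * Real.sqrt N * V ^ 2))))) := by
  classical
  set μ := pfMeasure ν with hμ
  set sN := Real.sqrt (N : ℝ) with hsNdef
  have hNR : (0:ℝ) < N := by exact_mod_cast hN
  have hsNpos : 0 < sN := Real.sqrt_pos.mpr hNR
  have hNsq : (N:ℝ) = sN ^ 2 := by rw [hsNdef, Real.sq_sqrt hNR.le]
  have hVpos : 0 < V := by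
    rw [hV]; exact lt_of_le_of_ne (variance_nonneg _ _) (Ne.symm hVar)
  have hσ0 : 0 < σ := by rw [hσ]; exact Real.sqrt_pos.mpr hσpos
  have hσsq : σ ^ 2 = sigmaSq ν f u := by rw [hσ, Real.sq_sqrt hσpos.le]
  have hZ2 : MemLp (Ypf f u) 2 μ := memℒp_Ypf hf ν u hY2
  have hgi : Integrable (fun ω => Yout f ω * Ypf f u ω) μ :=
    integrable_mul_of_memℒp_two hY2 hZ2
  have hhi : Integrable (fun ω => Yout f ω ^ 2) μ := by
    simpa [Pi.pow_apply] using hY2.integrable_sq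
  have hvd := variance_eq_sub hY2
  simp only [Pi.pow_apply] at hvd
  have hintY2 : (∫ ω, Yout f ω ^ 2 ∂μ) = V := by
    rw [hV, hvd, hcent]; ring
  have hintg : (∫ ω, Yout f ω * Ypf f u ω ∂μ) = C := by
    rw [hC, cov, hcent]; ring
  have hCS : C = S * V := by
    rw [hS, SCl, ← hC, ← hV, div_mul_cancel₀ _ hVpos.ne']
  set b := t * σ / sN with hb
  set a := S + b with ha
  set c := σ⁻¹ * V with hc
  have hcpos : 0 < c := mul_pos (inv_pos.mpr hσ0) hVpos
  have hDelta : DeltaN ν f u N t = fun ω => c * (Yout f ω * Ypf f u ω - a * Yout f ω ^ 2) := by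
    funext ω
    rw [DeltaN, ← hsNdef, ← hσ, ← hV, ← hS, ← hb, ← ha, hc]
  have hEΔ : (∫ ω, DeltaN ν f u N t ω ∂μ) = -(t * V ^ 2 / sN) := by
    rw [hDelta]
    rw [integral_const_mul, integral_sub hgi (hhi.const_mul a), integral_const_mul,
      hintg, hintY2, hCS, hc, ha, hb]
    field_simp
    ring
  intro ω' hQ
  set Pq := ∑ i ∈ Finset.range N, (W i ω').1 * (W i ω').2 with hPq
  set Qq := ∑ i ∈ Finset.range N, (W i ω').1 ^ 2 with hQq
  have hA : (∑ j ∈ Finset.range N,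
      σ⁻¹ * ((W j ω').1 * (W j ω').2 * V - (C + t * σ * V / sN) * (W j ω').1 ^ 2)) =
      c * (Pq - a * Qq) := by
    have hterm : ∀ j ∈ Finset.range N,
        σ⁻¹ * ((W j ω').1 * (W j ω').2 * V - (C + t * σ * V / sN) * (W j ω').1 ^ 2) =
        c * ((W j ω').1 * (W j ω').2 - a * (W j ω').1 ^ 2) := by
      intro j _
      rw [hCS, hc, ha, hb]
      field_simp
    rw [Finset.sum_congr rfl hterm, ← Finset.mul_sum, Finset.sum_sub_distrib,
      ← Finset.mul_sum, ← hPq, ← hQq]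
  have hSt : StildeN W N ω' = Pq / Qq := by
    rw [StildeN, ← hPq, ← hQq, div_div_div_comm, div_self (ne_of_gt hNR), div_one]
  have key : (Real.sqrt N / σ * (StildeN W N ω' - S) ≤ t) ↔ (Pq - a * Qq ≤ 0) := by
    rw [hSt, ← hsNdef]
    rw [mul_comm, ← le_div_iff₀ (div_pos hsNpos hσ0), div_div_eq_mul_div,
      sub_le_iff_le_add]
    have hba : t * σ / sN + S = a := by rw [ha, hb]; ring
    rw [hba, div_le_iff₀ hQ, ← sub_nonpos]
  constructor
  · rw [key, hA]
    have hk : 0 < (N:ℝ) ^ (-(1:ℝ)/2) := Real.rpow_pos_of_pos hNR _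
    rw [mul_nonpos_iff_of_pos hk, mul_nonpos_iff_of_pos hcpos]
  · intro hVarΔ
    have hsqrtVarpos : 0 < Real.sqrt (variance (DeltaN ν f u N t) μ) :=
      Real.sqrt_pos.mpr hVarΔ
    -- the variance identity
    have hVarΔeq : variance (DeltaN ν f u N t) μ =
        V ^ 4 * (1 + t * nuN ν f u N t / (σ * sN * V ^ 2)) := by
      by_cases ht : t = 0
      · have hb0 : b = 0 := by rw [hb, ht]; ring
        have hfun : DeltaN ν f u N t = fun ω =>
            (σ⁻¹ * V ^ 2) * ((variance (Yout f) μ)⁻¹ *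
              (Yout f ω * Ypf f u ω - SCl ν f u * Yout f ω ^ 2)) := by
          rw [hDelta]
          funext ω
          rw [ha, hb0, hc, ← hV, ← hS]
          field_simp
          ring
        rw [hfun, variance_const_mul]
        have hsig : variance (fun ω => (variance (Yout f) μ)⁻¹ *
            (Yout f ω * Ypf f u ω - SCl ν f u * Yout f ω ^ 2)) μ = sigmaSq ν f u := rfl
        rw [hsig, ← hσsq, ht]
        field_simp
        ring
      · have hbne : b ≠ 0 := by
          rw [hb]
          exact div_ne_zero (mul_ne_zero ht hσ0.ne') hsNpos.ne'
        -- measurability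
        have hYm : Measurable (Yout f) := hf.comp measurable_fst
        have hZm : Measurable (Ypf f u) := hf.comp (measurable_Xpf u)
        have hΔm : Measurable (DeltaN ν f u N t) := by
          rw [hDelta]
          exact (((hYm.mul hZm).sub ((hYm.pow_const 2).const_mul a)).const_mul c)
        set k₀ : (∀ i, 𝒳 i) × (∀ i, 𝒳 i) → ℝ := fun ω => (variance (Yout f) μ)⁻¹ *
            (Yout f ω * Ypf f u ω - SCl ν f u * Yout f ω ^ 2) with hk₀
        have hk₀m : Measurable k₀ := by
          rw [hk₀]
          exact (((hYm.mul hZm).sub ((hYm.pow_const 2).const_mul _)).const_mul _)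
        have hsigk : variance k₀ μ = sigmaSq ν f u := rfl
        -- MemLp from positivity of variances
        have hmem_of_pos : ∀ (X : (∀ i, 𝒳 i) × (∀ i, 𝒳 i) → ℝ), Measurable X →
            0 < variance X μ → MemLp X 2 μ := by
          intro X hXm hXv
          by_contra hcon
          have := evariance_eq_top hXm.aestronglyMeasurable hcon
          rw [variance, this] at hXv
          simp at hXv
        have hΔ2 : MemLp (DeltaN ν f u N t) 2 μ := hmem_of_pos _ hΔm hVarΔ
        have hk2 : MemLp k₀ 2 μ := hmem_of_pos _ hk₀m (by rw [hsigk]; exact hσpos)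
        have hh2 : MemLp (fun ω => Yout f ω ^ 2) 2 μ := by
          have heq : (fun ω => Yout f ω ^ 2) = fun ω =>
              (c * b)⁻¹ * (c * V * k₀ ω - DeltaN ν f u N t ω) := by
            funext ω
            rw [hDelta, hk₀, ← hV, ← hS, ha, hc]
            field_simp
            ring
          rw [heq]
          exact ((hk2.const_mul _).sub hΔ2).const_mul _
        have hg2 : MemLp (fun ω => Yout f ω * Ypf f u ω) 2 μ := by
          have heq : (fun ω => Yout f ω * Ypf f u ω) = fun ω =>
              V * k₀ ω + S * Yout f ω ^ 2 := by
            funext ω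
            rw [hk₀, ← hV, ← hS]
            field_simp
            ring
          rw [heq]
          exact (hk2.const_mul _).add (hh2.const_mul _)
        -- abbreviations for moments
        set E2g := ∫ ω, (Yout f ω * Ypf f u ω) ^ 2 ∂μ with hE2g
        set Egh := ∫ ω, (Yout f ω * Ypf f u ω) * (Yout f ω ^ 2) ∂μ with hEgh
        set E2h := ∫ ω, (Yout f ω ^ 2) ^ 2 ∂μ with hE2h
        set Eg := ∫ ω, Yout f ω * Ypf f u ω ∂μ with hEg
        set Eh := ∫ ω, Yout f ω ^ 2 ∂μ with hEh
        have hvar_r : ∀ r : ℝ, variance (fun ω =>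
            (Yout f ω * Ypf f u ω) - r * (Yout f ω ^ 2)) μ =
            (E2g - 2 * r * Egh + r ^ 2 * E2h) - (Eg - r * Eh) ^ 2 := by
          intro r
          rw [variance_sub_const_mul μ hg2 hh2 r]
        -- express variance of Δ
        have e3 : variance (DeltaN ν f u N t) μ =
            c ^ 2 * ((E2g - 2 * a * Egh + a ^ 2 * E2h) - (Eg - a * Eh) ^ 2) := by
          rw [hDelta]
          have : (fun ω => c * (Yout f ω * Ypf f u ω - a * Yout f ω ^ 2)) =
              fun ω => c * ((Yout f ω * Ypf f u ω) - a * (Yout f ω ^ 2)) := rfl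
          rw [this, variance_const_mul, hvar_r a]
        -- express sigmaSq
        have e2 : sigmaSq ν f u =
            (V⁻¹) ^ 2 * ((E2g - 2 * S * Egh + S ^ 2 * E2h) - (Eg - S * Eh) ^ 2) := by
          rw [← hsigk, hk₀]
          have : (fun ω => (variance (Yout f) μ)⁻¹ *
              (Yout f ω * Ypf f u ω - SCl ν f u * Yout f ω ^ 2)) =
              fun ω => V⁻¹ * ((Yout f ω * Ypf f u ω) - S * (Yout f ω ^ 2)) := by
            funext ω
            rw [← hV, ← hS]
          rw [this, variance_const_mul, hvar_r S]
        have hQS : (E2g - 2 * S * Egh + S ^ 2 * E2h) - (Eg - S * Eh) ^ 2 =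
            V ^ 2 * σ ^ 2 := by
          rw [hσsq, e2]
          field_simp
        -- express nuN
        have e4 : nuN ν f u N t = (b + 2 * S) * (E2h - Eh ^ 2) - 2 * (Egh - Eg * Eh) := by
          rw [nuN, ← hsNdef, ← hσ, ← hS, ← hb]
          have hvarh : variance (fun ω => Yout f ω ^ 2) μ = E2h - Eh ^ 2 := by
            have := variance_eq_sub hh2
            simp only [Pi.pow_apply] at this
            rw [this, ← hE2h, ← hEh]
          have hcovgh : cov μ (fun ω => Yout f ω * Ypf f u ω) (fun ω => Yout f ω ^ 2) =
              Egh - Eg * Eh := by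
            rw [cov, ← hEgh, ← hEg, ← hEh]
          rw [hvarh, hcovgh]
        -- assemble
        have expand : (E2g - 2 * a * Egh + a ^ 2 * E2h) - (Eg - a * Eh) ^ 2 =
            V ^ 2 * σ ^ 2 + b * ((b + 2 * S) * (E2h - Eh ^ 2) - 2 * (Egh - Eg * Eh)) := by
          rw [← hQS, ha]
          ring
        rw [e3, expand, e4, hc, hb]
        field_simp
    -- now the algebraic equivalence of the normalized event
    rw [key, hA, hEΔ]
    have h1τ : 1 + t * nuN ν f u N t / (σ * sN * V ^ 2) =
        variance (DeltaN ν f u N t) μ / V ^ 4 := by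
      rw [hVarΔeq]
      field_simp
    have h1τpos : 0 < 1 + t * nuN ν f u N t / (σ * sN * V ^ 2) := by
      rw [h1τ]
      exact div_pos hVarΔ (by positivity)
    have hsqrtVar : Real.sqrt (variance (DeltaN ν f u N t) μ) =
        V ^ 2 * Real.sqrt (1 + t * nuN ν f u N t / (σ * sN * V ^ 2)) := by
      have h44 : (0:ℝ) ≤ V ^ 4 := by positivity
      have h4s : Real.sqrt (V ^ 4) = V ^ 2 := by
        rw [show V ^ 4 = (V ^ 2) ^ 2 by ring, Real.sqrt_sq (sq_nonneg V)]
      rw [hVarΔeq, Real.sqrt_mul h44, h4s]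
    have hrhs : t / Real.sqrt (1 + t * nuN ν f u N t / (σ * sN * V ^ 2)) =
        t * V ^ 2 / Real.sqrt (variance (DeltaN ν f u N t) μ) := by
      have hE0 : Real.sqrt (1 + t * nuN ν f u N t / (σ * sN * V ^ 2)) ≠ 0 :=
        (Real.sqrt_pos.mpr h1τpos).ne'
      rw [hsqrtVar, mul_comm t (V ^ 2), mul_div_mul_left _ _ (pow_ne_zero 2 hVpos.ne')]
    have hlhs : sN * ((c * (Pq - a * Qq) / N - -(t * V ^ 2 / sN)) /
        Real.sqrt (variance (DeltaN ν f u N t) μ)) =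
        (c * (Pq - a * Qq) / sN + t * V ^ 2) /
          Real.sqrt (variance (DeltaN ν f u N t) μ) := by
      rw [← mul_div_assoc]
      congr 1
      rw [hNsq]
      field_simp
      ring
    rw [hlhs, hrhs, div_le_div_iff_of_pos_right hsqrtVarpos, add_le_iff_nonpos_left,
      show c * (Pq - a * Qq) / sN = (c / sN) * (Pq - a * Qq) by ring,
      mul_nonpos_iff_of_pos (div_pos hcpos hsNpos)]


end SobolPaper
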